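/- The coefficients c_{ij} = c_{ij}(n,α,β) satisfy the recurrence A(i) c_{i+1,j} = (i-j)(2i+2j-2n-α+β) c_{ij} + B(j) c_{i,j-1} + A(j) c_{i,j+1} - B(i) c_{i-1,j} for 0 ≤ i ≤ n-1 and 0 ≤ j ≤ n, where A(h) = (h-n)(h+β+1), B(h) = h(h-n-α-1), and c_{ij} := 0 when i or j lies outside {0,...,n}. -/

import Mathlib

open Finset

/-- Pochhammer symbol `(c)_k = c (c+1) ⋯ (c+k-1)`. -/
noncomputable def poch (c : ℝ) (k : ℕ) : ℝ := ∏ j ∈ Finset.range k, (c + j)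

/-- Bernstein polynomial `B^n_i(x)`. -/
noncomputable def bern (n i : ℕ) (x : ℝ) : ℝ := (n.choose i : ℝ) * x ^ i * (1 - x) ^ (n - i)

/-- Jacobi inner product on [0,1]. -/
noncomputable def jip (α β : ℝ) (f g : ℝ → ℝ) : ℝ :=
  ∫ x in (0:ℝ)..1, (1 - x) ^ α * x ^ β * f x * g x

/-- Beta function `B(a,b) = Γ(a)Γ(b)/Γ(a+b)`. -/
noncomputable def betaF (a b : ℝ) : ℝ := Real.Gamma a * Real.Gamma b / Real.Gamma (a + b)

/-- Hahn polynomial `Q_m(x; α, β, N)` as a terminating ₃F₂ sum. -/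
noncomputable def hahn (m : ℕ) (x : ℝ) (α β : ℝ) (N : ℕ) : ℝ :=
  ∑ k ∈ Finset.range (m + 1),
    poch (-(m : ℝ)) k * poch ((m : ℝ) + α + β + 1) k * poch (-x) k /
      ((k.factorial : ℝ) * poch (α + 1) k * poch (-(N : ℝ)) k)

/-- Shifted Jacobi polynomial `R_m^{(α,β)}(x)`. -/
noncomputable def sjac (m : ℕ) (α β : ℝ) (x : ℝ) : ℝ :=
  (poch (α + 1) m / (m.factorial : ℝ)) *
    ∑ k ∈ Finset.range (m + 1),
      poch (-(m : ℝ)) k * poch ((m : ℝ) + α + β + 1) k /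
        ((k.factorial : ℝ) * poch (α + 1) k) * (1 - x) ^ k

/-- The Bézier coefficient `c_{ij}(n,α,β)` of the dual Bernstein polynomial. -/
noncomputable def cCoef (n : ℕ) (α β : ℝ) (i j : ℕ) : ℝ :=
  (1 / betaF (α + 1) (β + 1)) *
    ∑ m ∈ Finset.range (n + 1),
      (2 * m / (α + β + 1) + 1) * poch (β + 1) m * poch (α + β + 1) m /
          ((m.factorial : ℝ) * poch (α + 1) m) *
        hahn m (i : ℝ) β α n * hahn m (j : ℝ) β α n

/-- Extension of `cCoef` by zero outside `{0,…,n} × {0,…,n}`. -/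
noncomputable def cExt (n : ℕ) (α β : ℝ) (i j : ℤ) : ℝ :=
  if 0 ≤ i ∧ i ≤ (n : ℤ) ∧ 0 ≤ j ∧ j ≤ (n : ℤ) then cCoef n α β i.toNat j.toNat else 0

/-! ### Auxiliary lemmas on the Pochhammer symbol -/

lemma poch_succ (c : ℝ) (k : ℕ) : poch c (k + 1) = poch c k * (c + k) :=
  Finset.prod_range_succ _ _

lemma poch_succ' (c : ℝ) (k : ℕ) : poch c (k + 1) = c * poch (c + 1) k := by
  rw [poch, Finset.prod_range_succ']
  simp only [Nat.cast_zero, add_zero, mul_comm]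
  congr 1
  apply Finset.prod_congr rfl
  intro j _
  push_cast
  ring

lemma pochR2 (x : ℝ) (k : ℕ) : x * poch (-(x - 1)) k = -poch (-x) (k + 1) := by
  rw [poch_succ' (-x) k]
  have : -x + 1 = -(x - 1) := by ring
  rw [this]
  ring

lemma pochR1 (x : ℝ) : ∀ k : ℕ,
    poch (-(x + 1)) (k + 1) = poch (-x) (k + 1) - ((k : ℝ) + 1) * poch (-x) k
  | 0 => by simp [poch]; ring
  | (k + 1) => by
    rw [poch_succ (-(x+1)) (k+1), pochR1 x k, poch_succ (-x) (k+1), poch_succ (-x) k]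
    push_cast
    ring

lemma poch_pos {c : ℝ} (hc : 0 < c) (k : ℕ) : 0 < poch c k := by
  apply Finset.prod_pos
  intro j _
  have : (0:ℝ) ≤ j := Nat.cast_nonneg j
  linarith

lemma poch_neg_nat_ne_zero {n k : ℕ} (h : k ≤ n) : poch (-(n : ℝ)) k ≠ 0 := by
  rw [poch]
  apply Finset.prod_ne_zero_iff.mpr
  intro j hj
  simp only [Finset.mem_range] at hj
  have hjn : j < n := lt_of_lt_of_le hj h
  have : (j : ℝ) < n := by exact_mod_cast hjn
  intro hz
  linarith

/-! ### The one-term difference identity -/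

lemma Ek (x nr α β : ℝ) (k : ℕ) :
    ((x - nr) * (x + β + 1)) * poch (-(x + 1)) (k + 1) +
      (x * (x - nr - α - 1)) * poch (-(x - 1)) (k + 1) -
      ((x - nr) * (x + β + 1) + x * (x - nr - α - 1)) * poch (-x) (k + 1)
    = ((k : ℝ) + 1) * (((k : ℝ) + 1) + α + β + 1) * poch (-x) (k + 1) -
      ((k : ℝ) + 1) * ((k : ℝ) - nr) * ((k : ℝ) + 1 + β) * poch (-x) k := by
  have h2 : (x * (x - nr - α - 1)) * poch (-(x - 1)) (k + 1)
      = (x - nr - α - 1) * (-poch (-x) (k + 2)) := by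
    rw [← pochR2 x (k+1)]; ring
  rw [pochR1, h2, show k + 2 = (k+1) + 1 from rfl, poch_succ (-x) (k+1), poch_succ (-x) k]
  push_cast
  ring

lemma Ek' (x nr α β : ℝ) : ∀ k : ℕ,
    ((x - nr) * (x + β + 1)) * poch (-(x + 1)) k +
      (x * (x - nr - α - 1)) * poch (-(x - 1)) k -
      ((x - nr) * (x + β + 1) + x * (x - nr - α - 1)) * poch (-x) k
    = (k : ℝ) * ((k : ℝ) + α + β + 1) * poch (-x) k -
      (k : ℝ) * (((k : ℝ) - 1) - nr) * ((k : ℝ) + β) * poch (-x) (k - 1)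
  | 0 => by simp [poch]
  | (k + 1) => by
    have := Ek x nr α β k
    push_cast
    simpa using this

/-! ### The Hahn difference equation -/

/-- Coefficients of the Hahn polynomial `Q_m(x; β, α, n)`. -/
noncomputable def aCoef (m n : ℕ) (α β : ℝ) (k : ℕ) : ℝ :=
  poch (-(m : ℝ)) k * poch ((m : ℝ) + β + α + 1) k /
    ((k.factorial : ℝ) * poch (β + 1) k * poch (-(n : ℝ)) k)

lemma hahn_eq (m n : ℕ) (α β : ℝ) (t : ℝ) :
    hahn m t β α n = ∑ k ∈ Finset.range (m + 1), aCoef m n α β k * poch (-t) k := by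
  unfold hahn aCoef
  refine Finset.sum_congr rfl fun k _ => by ring

lemma ratio (α β : ℝ) (hβ : β > -1) (m n k : ℕ) (hk : k < n) :
    aCoef m n α β (k + 1) * (((k : ℝ) + 1) * ((k : ℝ) - n) * ((k : ℝ) + 1 + β))
      = aCoef m n α β k * ((-(m : ℝ) + k) * ((m : ℝ) + β + α + 1 + k)) := by
  unfold aCoef
  rw [poch_succ, poch_succ, poch_succ, poch_succ, Nat.factorial_succ]
  have h1 : (k.factorial : ℝ) ≠ 0 := by exact_mod_cast k.factorial_ne_zero
  have h2 : poch (β + 1) k ≠ 0 := ne_of_gt (poch_pos (by linarith) k)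
  have h3 : poch (-(n : ℝ)) k ≠ 0 := poch_neg_nat_ne_zero (le_of_lt hk)
  have h4 : ((k : ℝ) + 1) ≠ 0 := by positivity
  have h5 : (β + 1 + k) ≠ 0 := by have : (0:ℝ) ≤ k := Nat.cast_nonneg k; linarith
  have h6 : (-(n : ℝ) + k) ≠ 0 := by
    have : (k : ℝ) < n := by exact_mod_cast hk
    intro h; linarith
  push_cast
  field_simp
  ring

lemma hahn_diff (α β : ℝ) (hβ : β > -1) (n m : ℕ) (hm : m ≤ n) (x : ℝ) :
    ((x - n) * (x + β + 1)) * hahn m (x + 1) β α n +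
      (x * (x - n - α - 1)) * hahn m (x - 1) β α n
    = ((x - n) * (x + β + 1) + x * (x - n - α - 1) + (m : ℝ) * ((m : ℝ) + β + α + 1)) *
        hahn m x β α n := by
  rw [hahn_eq, hahn_eq, hahn_eq]
  simp only [Finset.mul_sum]
  rw [← Finset.sum_add_distrib, ← sub_eq_zero, ← Finset.sum_sub_distrib]
  have key : ∀ k ∈ Finset.range (m + 1),
      ((x - n) * (x + β + 1)) * (aCoef m n α β k * poch (-(x + 1)) k) +
        (x * (x - n - α - 1)) * (aCoef m n α β k * poch (-(x - 1)) k) -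
        ((x - n) * (x + β + 1) + x * (x - n - α - 1) + (m : ℝ) * ((m : ℝ) + β + α + 1)) *
          (aCoef m n α β k * poch (-x) k)
      = aCoef m n α β k * (((k : ℝ) * ((k : ℝ) + α + β + 1)
            - (m : ℝ) * ((m : ℝ) + β + α + 1)) * poch (-x) k)
        - aCoef m n α β k * ((k : ℝ) * (((k : ℝ) - 1) - (n:ℝ)) * ((k : ℝ) + β) * poch (-x) (k - 1)) := by
    intro k _
    have := Ek' x (n : ℝ) α β k
    linear_combination aCoef m n α β k * this
  rw [Finset.sum_congr rfl key, Finset.sum_sub_distrib, sub_eq_zero]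
  rw [Finset.sum_range_succ, Finset.sum_range_succ']
  have hlast : aCoef m n α β m * (((m : ℝ) * ((m : ℝ) + α + β + 1)
      - (m : ℝ) * ((m : ℝ) + β + α + 1)) * poch (-x) m) = 0 := by ring_nf
  have hfirst : aCoef m n α β 0 * ((0 : ℕ) * (((0:ℕ) - 1 : ℝ) - (n:ℝ)) * (((0:ℕ):ℝ) + β) * poch (-x) (0 - 1)) = 0 := by
    simp
  rw [hlast, hfirst, add_zero, add_zero]
  refine Finset.sum_congr rfl fun k hk => ?_
  simp only [Finset.mem_range] at hk
  have hr := ratio α β hβ m n k (lt_of_lt_of_le hk hm)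
  have hsimp : (k + 1 : ℕ) - 1 = k := rfl
  rw [hsimp]
  push_cast
  linear_combination (-(poch (-x) k)) * hr

/-! ### The two-variable core identity -/

/-- `cCoef` as a function of real arguments. -/
noncomputable def Dfun (n : ℕ) (α β : ℝ) (x y : ℝ) : ℝ :=
  (1 / betaF (α + 1) (β + 1)) *
    ∑ m ∈ Finset.range (n + 1),
      (2 * m / (α + β + 1) + 1) * poch (β + 1) m * poch (α + β + 1) m /
          ((m.factorial : ℝ) * poch (α + 1) m) *
        hahn m x β α n * hahn m y β α n

lemma cCoef_eq_Dfun (n : ℕ) (α β : ℝ) (i j : ℕ) :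
    cCoef n α β i j = Dfun n α β (i : ℝ) (j : ℝ) := rfl

lemma core (α β : ℝ) (hβ : β > -1) (n : ℕ) (x y : ℝ) :
    ((x - n) * (x + β + 1)) * Dfun n α β (x + 1) y +
      (x * (x - n - α - 1)) * Dfun n α β (x - 1) y
    = (x - y) * (2 * x + 2 * y - 2 * n - α + β) * Dfun n α β x y +
        (y * (y - n - α - 1)) * Dfun n α β x (y - 1) +
        ((y - n) * (y + β + 1)) * Dfun n α β x (y + 1) := by
  unfold Dfun
  simp only [Finset.mul_sum]
  rw [← Finset.sum_add_distrib, ← sub_eq_zero, ← Finset.sum_add_distrib,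
    ← Finset.sum_add_distrib, ← Finset.sum_sub_distrib]
  apply Finset.sum_eq_zero
  intro m hm
  simp only [Finset.mem_range] at hm
  have hm' : m ≤ n := by omega
  have hx := hahn_diff α β hβ n m hm' x
  have hy := hahn_diff α β hβ n m hm' y
  set c := (1 / betaF (α + 1) (β + 1)) *
    ((2 * (m:ℝ) / (α + β + 1) + 1) * poch (β + 1) m * poch (α + β + 1) m /
      ((m.factorial : ℝ) * poch (α + 1) m)) with hc
  linear_combination (c * hahn m y β α n) * hx - (c * hahn m x β α n) * hy

/-! ### Relating `cExt` and `Dfun` -/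

lemma cExt_eq (n : ℕ) (α β : ℝ) (i j : ℤ) (hi0 : 0 ≤ i) (hi : i ≤ (n : ℤ))
    (hj0 : 0 ≤ j) (hj : j ≤ (n : ℤ)) :
    cExt n α β i j = Dfun n α β (i : ℝ) (j : ℝ) := by
  rw [cExt, if_pos ⟨hi0, hi, hj0, hj⟩, cCoef_eq_Dfun]
  have h1 : ((i.toNat : ℕ) : ℝ) = (i : ℝ) := by
    exact_mod_cast congrArg (fun z : ℤ => (z : ℝ)) (Int.toNat_of_nonneg hi0)
  have h2 : ((j.toNat : ℕ) : ℝ) = (j : ℝ) := by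
    exact_mod_cast congrArg (fun z : ℤ => (z : ℝ)) (Int.toNat_of_nonneg hj0)
  rw [h1, h2]

lemma cExt_zero {n : ℕ} {α β : ℝ} {i j : ℤ}
    (h : ¬(0 ≤ i ∧ i ≤ (n : ℤ) ∧ 0 ≤ j ∧ j ≤ (n : ℤ))) :
    cExt n α β i j = 0 := by
  rw [cExt, if_neg h]

theorem bezier_coefficients_recurrence (α β : ℝ) (hα : α > -1) (hβ : β > -1)
    (n : ℕ) (i j : ℤ) (hi0 : 0 ≤ i) (hi : i ≤ (n : ℤ) - 1) (hj0 : 0 ≤ j) (hj : j ≤ (n : ℤ)) :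
    (((i : ℝ) - n) * ((i : ℝ) + β + 1)) * cExt n α β (i + 1) j =
      ((i : ℝ) - (j : ℝ)) * (2 * (i : ℝ) + 2 * (j : ℝ) - 2 * n - α + β) * cExt n α β i j +
        ((j : ℝ) * ((j : ℝ) - n - α - 1)) * cExt n α β i (j - 1) +
        (((j : ℝ) - n) * ((j : ℝ) + β + 1)) * cExt n α β i (j + 1) -
        ((i : ℝ) * ((i : ℝ) - n - α - 1)) * cExt n α β (i - 1) j := by
  have h1 : cExt n α β (i + 1) j = Dfun n α β ((i : ℝ) + 1) (j : ℝ) := by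
    have := cExt_eq n α β (i + 1) j (by omega) (by omega) hj0 hj
    rwa [show (((i + 1 : ℤ)) : ℝ) = (i : ℝ) + 1 by push_cast; ring] at this
  have h2 : cExt n α β i j = Dfun n α β (i : ℝ) (j : ℝ) :=
    cExt_eq n α β i j hi0 (by omega) hj0 hj
  have h3 : ((j : ℝ) * ((j : ℝ) - n - α - 1)) * cExt n α β i (j - 1)
      = ((j : ℝ) * ((j : ℝ) - n - α - 1)) * Dfun n α β (i : ℝ) ((j : ℝ) - 1) := by
    by_cases hj' : j = 0
    · subst hj'; norm_num
    · have := cExt_eq n α β i (j - 1) hi0 (by omega) (by omega) (by omega)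
      rw [this, show (((j - 1 : ℤ)) : ℝ) = (j : ℝ) - 1 by push_cast; ring]
  have h4 : (((j : ℝ) - n) * ((j : ℝ) + β + 1)) * cExt n α β i (j + 1)
      = (((j : ℝ) - n) * ((j : ℝ) + β + 1)) * Dfun n α β (i : ℝ) ((j : ℝ) + 1) := by
    by_cases hj' : j = (n : ℤ)
    · have hz : cExt n α β i (j + 1) = 0 := cExt_zero (by omega)
      have hc : ((j : ℝ) - n) = 0 := by
        subst hj'; push_cast; ring
      rw [hz, hc]; ring
    · have := cExt_eq n α β i (j + 1) hi0 (by omega) (by omega) (by omega)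
      rw [this, show (((j + 1 : ℤ)) : ℝ) = (j : ℝ) + 1 by push_cast; ring]
  have h5 : ((i : ℝ) * ((i : ℝ) - n - α - 1)) * cExt n α β (i - 1) j
      = ((i : ℝ) * ((i : ℝ) - n - α - 1)) * Dfun n α β ((i : ℝ) - 1) (j : ℝ) := by
    by_cases hi' : i = 0
    · subst hi'; norm_num
    · have := cExt_eq n α β (i - 1) j (by omega) (by omega) hj0 hj
      rw [this, show (((i - 1 : ℤ)) : ℝ) = (i : ℝ) - 1 by push_cast; ring]
  rw [h1, h2, h3, h4, h5]
  linear_combination core α β hβ n (i : ℝ) (j : ℝ)
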